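/- Let n ≥ 1, let P be the Z₂-crown of order n, and let f : P → Q₁ be a Z₂-map. Then f̂(soi(P)) = soi(Q₁) in ZMod2^{Q₁²}. -/

import Mathlib

/-! ### The poset `Q₁` (face poset of the 1-dimensional cross-polytope) -/

/-- The four elements `+0, -0, +1, -1` of `Q₁`. -/
inductive Q1 : Type
  | p0 | m0 | p1 | m1
deriving DecidableEq

instance instFintypeQ1 : Fintype Q1 :=
  ⟨{Q1.p0, Q1.m0, Q1.p1, Q1.m1}, by intro x; cases x <;> simp⟩

/-- The level (`false` for `±0`, `true` for `±1`) of an element of `Q₁`. -/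
def Q1.lvl : Q1 → Bool
  | .p0 => false | .m0 => false | .p1 => true | .m1 => true

/-- The order on `Q₁`: `±0 < ±1` (all four strict relations). -/
instance : PartialOrder Q1 where
  le x y := x = y ∨ (x.lvl = false ∧ y.lvl = true)
  le_refl x := Or.inl rfl
  le_trans x y z hxy hyz := by
    rcases hxy with rfl | ⟨h1, h2⟩
    · exact hyz
    rcases hyz with rfl | ⟨h3, h4⟩
    · exact Or.inr ⟨h1, h2⟩
    · rw [h2] at h3; exact absurd h3 (by simp)
  le_antisymm x y hxy hyx := by
    rcases hxy with rfl | ⟨h1, h2⟩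
    · rfl
    rcases hyx with rfl | ⟨h3, h4⟩
    · rfl
    · rw [h2] at h3; exact absurd h3 (by simp)

/-- The involution of `Q₁`, swapping `+x` and `-x`. -/
def q1inv : Q1 → Q1
  | .p0 => .m0 | .m0 => .p0 | .p1 => .m1 | .m1 => .p1

/-! ### The `Z₂`-crown of order `n` -/

/-- The `Z₂`-crown of order `n` has element set `ZMod (4n)`. -/
abbrev Crown (n : ℕ) : Type := ZMod (4 * n)

instance (n : ℕ) [NeZero n] : NeZero (4 * n) := ⟨by have := NeZero.ne n; omega⟩

private lemma crown_parity {n : ℕ} [NeZero n] (x : ZMod (4 * n)) :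
    (x + 1).val % 2 = (x.val + 1) % 2 := by
  haveI : Fact (1 < 4 * n) := ⟨by have := NeZero.ne n; omega⟩
  rw [ZMod.val_add, ZMod.val_one, Nat.mod_mod_of_dvd _ ⟨2 * n, by ring⟩]

/-- The order on the crown, generated by `e < e + 1` and `e < e - 1` for even `e`. -/
instance crownPO (n : ℕ) [NeZero n] : PartialOrder (Crown n) where
  le x y := x = y ∨ (Even x.val ∧ (y = x + 1 ∨ y = x - 1))
  le_refl x := Or.inl rfl
  le_trans x y z hxy hyz := by
    rcases hxy with rfl | ⟨hex, hy⟩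
    · exact hyz
    rcases hyz with rfl | ⟨hey, hz⟩
    · exact Or.inr ⟨hex, hy⟩
    · exfalso
      rcases hy with rfl | rfl
      · have h := crown_parity x
        rw [Nat.even_iff] at hex hey; omega
      · have e : x - 1 + 1 = x := by ring
        have h := crown_parity (x - 1)
        rw [e] at h
        rw [Nat.even_iff] at hex hey; omega
  le_antisymm x y hxy hyx := by
    rcases hxy with rfl | ⟨hex, hy⟩
    · rfl
    rcases hyx with rfl | ⟨hey, hx⟩
    · rfl
    · exfalso
      rcases hy with rfl | rfl
      · have h := crown_parity x
        rw [Nat.even_iff] at hex hey; omega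
      · have e : x - 1 + 1 = x := by ring
        have h := crown_parity (x - 1)
        rw [e] at h
        rw [Nat.even_iff] at hex hey; omega

/-! ### The vector space `ZMod2^{P²}` with its strict order indicator -/

/-- Ordered pairs `(x,y)` with `x ≤ y` of a poset: the basis of `ZMod2^{P²}`. -/
abbrev OPairs (P : Type) [PartialOrder P] : Type := {p : P × P // p.1 ≤ p.2}

/-- The `ZMod 2`-vector space with basis the ordered pairs of `P`. -/
abbrev VS (P : Type) [PartialOrder P] := OPairs P →₀ ZMod 2

open scoped Classical in
/-- The strict order indicator: the sum of the basis elements `(x,y)` with `x < y`. -/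
noncomputable def soi (P : Type) [PartialOrder P] [Finite P] : VS P :=
  letI : Fintype (OPairs P) := Fintype.ofFinite _
  ∑ p : OPairs P, if p.val.1 < p.val.2 then Finsupp.single p 1 else 0

open scoped Classical in
/-- The sum of the basis elements `(x,y)` with `x < y` and `x, y ∈ S`. -/
noncomputable def soiOn {P : Type} [PartialOrder P] [Finite P] (S : Set P) : VS P :=
  letI : Fintype (OPairs P) := Fintype.ofFinite _
  ∑ p : OPairs P,
    if p.val.1 ∈ S ∧ p.val.2 ∈ S ∧ p.val.1 < p.val.2 then Finsupp.single p 1 else 0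

/-- The linear map `f̂` induced by a monotone map, sending the basis element `(x,y)`
to `(f x, f y)`. -/
noncomputable def fhat {P Q : Type} [PartialOrder P] [PartialOrder Q] {f : P → Q}
    (hf : Monotone f) : VS P →ₗ[ZMod 2] VS Q :=
  Finsupp.lmapDomain (ZMod 2) (ZMod 2) (fun p => ⟨(f p.val.1, f p.val.2), hf p.prop⟩)

/-! ### Auxiliary lemmas for the proof -/

section Q1Aux

private lemma q1_le_iff (a b : Q1) : a ≤ b ↔ (a = b ∨ (a.lvl = false ∧ b.lvl = true)) := Iff.rfl

instance : DecidableRel ((· ≤ ·) : Q1 → Q1 → Prop) := fun a b =>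
  decidable_of_iff _ (q1_le_iff a b).symm

instance : DecidableRel ((· < ·) : Q1 → Q1 → Prop) := fun a b =>
  decidable_of_iff _ (lt_iff_le_not_ge (a := a) (b := b)).symm

private lemma q1_le_lvl_false : ∀ x v : Q1, x ≤ v → v.lvl = false → x = v := by decide

private lemma q1_lvl_true_le : ∀ v x : Q1, v ≤ x → v.lvl = true → x = v := by decide

private lemma q1inv_invol : ∀ x, q1inv (q1inv x) = x := by decide

private lemma q1inv_ne : ∀ x, q1inv x ≠ x := by decide

private lemma q1inv_inj : ∀ x y : Q1, q1inv x = q1inv y → x = y := by decide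

end Q1Aux

section CrownAux

variable {n : ℕ} [NeZero n]

private lemma crown_le_iff (x y : Crown n) :
    x ≤ y ↔ (x = y ∨ (Even x.val ∧ (y = x + 1 ∨ y = x - 1))) := Iff.rfl

private lemma crown_one_ne_zero' : (1 : Crown n) ≠ 0 := by
  haveI : Fact (1 < 4 * n) := ⟨by have := NeZero.ne n; omega⟩
  exact one_ne_zero

private lemma crown_two_ne_zero' : (2 : Crown n) ≠ 0 := by
  intro h
  have h2 : ((2 : ℕ) : Crown n).val = 2 :=
    ZMod.val_cast_of_lt (by have := NeZero.ne n; omega)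
  rw [show ((2 : ℕ) : Crown n) = (2 : Crown n) by push_cast; ring] at h2
  rw [h] at h2
  simp at h2

private lemma par_succ (x : Crown n) : Even ((x + 1).val) ↔ ¬ Even x.val := by
  have := crown_parity x
  rw [Nat.even_iff, Nat.even_iff]
  omega

private lemma par_pred (x : Crown n) : Even ((x - 1).val) ↔ ¬ Even x.val := by
  have h := par_succ (x - 1)
  rw [sub_add_cancel] at h
  tauto

private lemma crown_lt_iff (x y : Crown n) :
    x < y ↔ (Even x.val ∧ (y = x + 1 ∨ y = x - 1)) := by
  rw [lt_iff_le_and_ne, crown_le_iff]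
  constructor
  · rintro ⟨h | h, hne⟩
    · exact absurd h hne
    · exact h
  · rintro ⟨he, hy⟩
    refine ⟨Or.inr ⟨he, hy⟩, ?_⟩
    rintro rfl
    rcases hy with h | h
    · exact crown_one_ne_zero' (left_eq_add.mp h)
    · exact crown_one_ne_zero' (sub_eq_self.mp h.symm)

private lemma crown_le_succ (k : Crown n) (h : Even k.val) : k ≤ k + 1 :=
  (crown_le_iff _ _).mpr (Or.inr ⟨h, Or.inl rfl⟩)

private lemma crown_le_pred (k : Crown n) (h : Even k.val) : k ≤ k - 1 :=
  (crown_le_iff _ _).mpr (Or.inr ⟨h, Or.inr rfl⟩)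

private lemma crown_pred_le (k : Crown n) (h : ¬ Even k.val) : k - 1 ≤ k := by
  have h2 := crown_le_succ (k - 1) ((par_pred k).mpr h)
  rwa [sub_add_cancel] at h2

private lemma crown_succ_le (k : Crown n) (h : ¬ Even k.val) : k + 1 ≤ k := by
  have h2 := crown_le_pred (k + 1) ((par_succ k).mpr h)
  rwa [add_sub_cancel_right] at h2

private def cpair (f : Crown n → Q1) (k : Crown n) : Q1 × Q1 :=
  if Even k.val then (f k, f (k + 1)) else (f (k + 1), f k)

private lemma cpair_le {f : Crown n → Q1} (hmono : Monotone f) (k : Crown n) :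
    (cpair f k).1 ≤ (cpair f k).2 := by
  unfold cpair
  split_ifs with h
  · exact hmono (crown_le_succ k h)
  · exact hmono (crown_succ_le k h)

private def edgeP (k : Crown n) : OPairs (Crown n) :=
  if h : Even k.val then ⟨(k, k + 1), crown_le_succ k h⟩
  else ⟨(k + 1, k), crown_succ_le k h⟩

end CrownAux

section ReductionAux

variable {n : ℕ} [NeZero n]

private lemma fhat_soi_apply (f : Crown n → Q1) (hmono : Monotone f) (q : OPairs Q1) :
    fhat hmono (soi (Crown n)) q
      = ∑ k : Crown n, (if cpair f k = q.val then (1 : ZMod 2) else 0) := by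
  classical
  unfold soi fhat
  rw [Subsingleton.elim (Fintype.ofFinite (OPairs (Crown n))) (Subtype.fintype _)]
  rw [map_sum, Finsupp.finset_sum_apply]
  have step : ∀ p : OPairs (Crown n),
      (Finsupp.lmapDomain (ZMod 2) (ZMod 2)
        (fun p : OPairs (Crown n) => (⟨(f p.val.1, f p.val.2), hmono p.prop⟩ : OPairs Q1)))
        (if p.val.1 < p.val.2 then Finsupp.single p 1 else 0) q
      = (if (p.val.1 < p.val.2 ∧ (f p.val.1, f p.val.2) = q.val) then (1 : ZMod 2) else 0) := by
    intro p
    by_cases h1 : p.val.1 < p.val.2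
    · rw [if_pos h1, Finsupp.lmapDomain_apply, Finsupp.mapDomain_single, Finsupp.single_apply]
      by_cases h2 : (f p.val.1, f p.val.2) = q.val
      · rw [if_pos (Subtype.ext h2), if_pos ⟨h1, h2⟩]
      · rw [if_neg (fun hc => h2 (congrArg Subtype.val hc)), if_neg (fun hc => h2 hc.2)]
    · rw [if_neg h1, if_neg (fun hc => h1 hc.1), map_zero, Finsupp.zero_apply]
  rw [Finset.sum_congr rfl (fun p _ => step p), Finset.sum_boole, Finset.sum_boole]
  congr 1
  apply Finset.card_nbij' (i := fun p : OPairs (Crown n) =>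
      if p.val.2 = p.val.1 + 1 then p.val.1 else p.val.2) (j := fun k => edgeP k)
  · rintro p hp
    rw [Finset.mem_coe, Finset.mem_filter] at hp ⊢; beta_reduce
    obtain ⟨-, hlt, hfq⟩ := hp
    refine ⟨Finset.mem_univ _, ?_⟩
    rw [crown_lt_iff] at hlt
    obtain ⟨he, h2 | h2⟩ := hlt
    · rw [if_pos h2]
      unfold cpair
      rw [if_pos he, ← h2]
      exact hfq
    · have hne : p.val.2 ≠ p.val.1 + 1 := by
        rw [h2]; intro hc
        exact crown_two_ne_zero' (by linear_combination -hc)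
      rw [if_neg hne, h2]
      unfold cpair
      have hodd : ¬ Even ((p.val.1 - 1)).val := by simp [par_pred, he]
      rw [if_neg hodd, sub_add_cancel, ← h2]
      exact hfq
  · rintro k hk
    rw [Finset.mem_coe, Finset.mem_filter] at hk ⊢; beta_reduce
    obtain ⟨-, hk⟩ := hk
    refine ⟨Finset.mem_univ _, ?_⟩
    unfold edgeP
    unfold cpair at hk
    by_cases h : Even k.val
    · rw [if_pos h] at hk
      rw [dif_pos h]
      exact ⟨(crown_lt_iff _ _).mpr ⟨h, Or.inl rfl⟩, hk⟩
    · rw [if_neg h] at hk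
      rw [dif_neg h]
      exact ⟨(crown_lt_iff _ _).mpr ⟨(par_succ k).mpr h,
        Or.inr (add_sub_cancel_right k 1).symm⟩, hk⟩
  · rintro p hp
    rw [Finset.mem_coe, Finset.mem_filter] at hp; beta_reduce
    obtain ⟨-, hlt, -⟩ := hp
    rw [crown_lt_iff] at hlt
    obtain ⟨he, h2 | h2⟩ := hlt
    · rw [if_pos h2]
      unfold edgeP
      rw [dif_pos he]
      exact Subtype.ext (Prod.ext rfl h2.symm)
    · have hne : p.val.2 ≠ p.val.1 + 1 := by
        rw [h2]; intro hc
        exact crown_two_ne_zero' (by linear_combination -hc)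
      rw [if_neg hne, h2]
      unfold edgeP
      have hodd : ¬ Even ((p.val.1 - 1)).val := by simp [par_pred, he]
      rw [dif_neg hodd]
      exact Subtype.ext (Prod.ext (sub_add_cancel _ _) h2.symm)
  · rintro k hk
    unfold edgeP; beta_reduce
    by_cases h : Even k.val
    · rw [dif_pos h]
      simp
    · rw [dif_neg h]
      have hne : k ≠ k + 1 + 1 := by
        intro hc
        exact crown_two_ne_zero' (by linear_combination -hc)
      simp [hne]

private lemma soi_q1_apply (q : OPairs Q1) :
    soi Q1 q = if q.val.1 < q.val.2 then (1 : ZMod 2) else 0 := by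
  classical
  unfold soi
  rw [Subsingleton.elim (Fintype.ofFinite (OPairs Q1)) (Subtype.fintype _)]
  rw [Finsupp.finset_sum_apply]
  have step : ∀ r : OPairs Q1,
      (@ite _ (r.val.1 < r.val.2) (Classical.propDecidable _)
          (Finsupp.single r (1 : ZMod 2)) 0) q
        = if r = q then (if r.val.1 < r.val.2 then (1 : ZMod 2) else 0) else 0 := by
    intro r
    rw [apply_ite (fun v : VS Q1 => v q), Finsupp.single_apply, Finsupp.zero_apply]
    by_cases h1 : r = q <;> by_cases h2 : r.val.1 < r.val.2 <;> simp [h1, h2]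
  rw [Finset.sum_congr rfl (fun r _ => step r), Finset.sum_ite_eq' Finset.univ q
    (fun r => if r.val.1 < r.val.2 then (1 : ZMod 2) else 0)]
  simp

end ReductionAux

section CountingAux

variable {n : ℕ} [NeZero n]

private lemma diag_sum (f : Crown n → Q1) (hmono : Monotone f) (v : Q1) :
    ∑ k : Crown n, (if cpair f k = (v, v) then (1 : ZMod 2) else 0) = 0 := by
  classical
  have hcond : ∀ k : Crown n, (cpair f k = (v, v)) ↔ (f k = v ∧ f (k + 1) = v) := by
    intro k
    unfold cpair
    split_ifs <;> rw [Prod.ext_iff] <;> exact ⟨fun h => ⟨by tauto, by tauto⟩,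
      fun h => ⟨by tauto, by tauto⟩⟩
  have hone : ∀ a b : Crown n, a + 1 ≠ a := fun a b h =>
    crown_one_ne_zero' (left_eq_add.mp h.symm)
  have honem : ∀ a : Crown n, a - 1 ≠ a := fun a h =>
    crown_one_ne_zero' (sub_eq_self.mp h)
  cases hv : v.lvl with
  | false =>
    apply Finset.sum_ninvolution (g := fun k => if Even k.val then k + 1 else k - 1)
    · intro k
      have hiff : (cpair f k = (v, v)) ↔
          (cpair f (if Even k.val then k + 1 else k - 1) = (v, v)) := by
        rw [hcond, hcond]
        by_cases h : Even k.val
        · rw [if_pos h]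
          constructor
          · rintro ⟨ha, hb⟩
            refine ⟨hb, ?_⟩
            have hev : ¬ Even ((k + 1).val) := by simp [par_succ, h]
            exact q1_le_lvl_false _ _
              (le_trans (hmono (crown_succ_le (k + 1) hev)) (le_of_eq hb)) hv
          · rintro ⟨ha, hb⟩
            exact ⟨q1_le_lvl_false _ _
              (le_trans (hmono (crown_le_succ k h)) (le_of_eq ha)) hv, ha⟩
        · rw [if_neg h]
          have hk1 : k - 1 + 1 = k := sub_add_cancel k 1
          constructor
          · rintro ⟨ha, hb⟩
            refine ⟨?_, by rw [hk1]; exact ha⟩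
            exact q1_le_lvl_false _ _
              (le_trans (hmono (crown_pred_le k h)) (le_of_eq ha)) hv
          · rintro ⟨ha, hb⟩
            rw [hk1] at hb
            exact ⟨hb, q1_le_lvl_false _ _
              (le_trans (hmono (crown_succ_le k h)) (le_of_eq hb)) hv⟩
      by_cases hc : cpair f k = (v, v)
      · rw [if_pos hc, if_pos (hiff.mp hc)]; decide
      · rw [if_neg hc, if_neg (fun hx => hc (hiff.mpr hx))]; decide
    · intro k _
      split_ifs with h
      · exact hone k k
      · exact honem k
    · intro k
      exact Finset.mem_univ _
    · intro k
      by_cases h : Even k.val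
      · rw [if_pos h]
        have h2 : ¬ Even ((k + 1).val) := by simp [par_succ, h]
        rw [if_neg h2, add_sub_cancel_right]
      · rw [if_neg h]
        have h2 : Even ((k - 1).val) := (par_pred k).mpr h
        rw [if_pos h2, sub_add_cancel]
  | true =>
    apply Finset.sum_ninvolution (g := fun k => if Even k.val then k - 1 else k + 1)
    · intro k
      have hiff : (cpair f k = (v, v)) ↔
          (cpair f (if Even k.val then k - 1 else k + 1) = (v, v)) := by
        rw [hcond, hcond]
        by_cases h : Even k.val
        · rw [if_pos h]
          have hk1 : k - 1 + 1 = k := sub_add_cancel k 1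
          constructor
          · rintro ⟨ha, hb⟩
            refine ⟨?_, by rw [hk1]; exact ha⟩
            exact q1_lvl_true_le _ _
              (le_trans (le_of_eq ha.symm) (hmono (crown_le_pred k h))) hv
          · rintro ⟨ha, hb⟩
            rw [hk1] at hb
            refine ⟨hb, ?_⟩
            exact q1_lvl_true_le _ _
              (le_trans (le_of_eq hb.symm) (hmono (crown_le_succ k h))) hv
        · rw [if_neg h]
          constructor
          · rintro ⟨ha, hb⟩
            refine ⟨hb, ?_⟩
            have hev : Even ((k + 1).val) := (par_succ k).mpr h
            exact q1_lvl_true_le _ _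
              (le_trans (le_of_eq hb.symm) (hmono (crown_le_succ (k + 1) hev))) hv
          · rintro ⟨ha, hb⟩
            refine ⟨?_, ha⟩
            exact q1_lvl_true_le _ _
              (le_trans (le_of_eq ha.symm) (hmono (crown_succ_le k h))) hv
      by_cases hc : cpair f k = (v, v)
      · rw [if_pos hc, if_pos (hiff.mp hc)]; decide
      · rw [if_neg hc, if_neg (fun hx => hc (hiff.mpr hx))]; decide
    · intro k _
      split_ifs with h
      · exact honem k
      · exact hone k k
    · intro k
      exact Finset.mem_univ _
    · intro k
      by_cases h : Even k.val
      · rw [if_pos h]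
        have h2 : Even ((k - 1).val) ↔ ¬ Even k.val := par_pred k
        rw [if_neg (by simp [h2, h]), sub_add_cancel]
      · rw [if_neg h]
        have h2 : Even ((k + 1).val) := (par_succ k).mpr h
        rw [if_pos h2, add_sub_cancel_right]

end CountingAux

section StrictAux

variable {n : ℕ} [NeZero n]

private def npair (f : Crown n → Q1) (j : ℕ) : Q1 × Q1 :=
  if Even j then (f (j : Crown n), f ((j + 1 : ℕ) : Crown n))
  else (f ((j + 1 : ℕ) : Crown n), f (j : Crown n))

private lemma cpair_natCast (f : Crown n → Q1) (j : ℕ) :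
    cpair f ((j : ℕ) : Crown n) = npair f j := by
  have hpar : Even (((j : ℕ) : Crown n)).val ↔ Even j := by
    rw [ZMod.val_natCast, Nat.even_iff, Nat.even_iff,
      Nat.mod_mod_of_dvd j ⟨2 * n, by ring⟩]
  unfold cpair npair
  rw [show (((j + 1 : ℕ) : Crown n)) = ((j : Crown n) + 1) by push_cast; ring]
  exact if_congr hpar rfl rfl

private lemma npair_le {f : Crown n → Q1} (hmono : Monotone f) (j : ℕ) :
    (npair f j).1 ≤ (npair f j).2 := by
  rw [← cpair_natCast]
  exact cpair_le hmono _

private lemma zmod_sum_to_range (F : Crown n → ZMod 2) :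
    ∑ k : Crown n, F k = ∑ j ∈ Finset.range (4 * n), F ((j : ℕ) : Crown n) := by
  apply Finset.sum_nbij' (i := fun (k : Crown n) => k.val)
    (j := fun (j : ℕ) => ((j : ℕ) : Crown n))
  · intro k _
    exact Finset.mem_range.mpr (ZMod.val_lt k)
  · intro j _
    exact Finset.mem_univ _
  · intro k _
    exact ZMod.natCast_rightInverse k
  · intro j hj
    exact ZMod.val_cast_of_lt (Finset.mem_range.mp hj)
  · intro k _
    exact congrArg F (ZMod.natCast_rightInverse k).symm

private lemma strict_sum (f : Crown n → Q1) (hmono : Monotone f)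
    (hequiv : ∀ x : Crown n, f (x + ((2 * n : ℕ) : Crown n)) = q1inv (f x))
    (s : Q1 → Bool) (hsinv : ∀ x, s (q1inv x) = ! s x)
    (qv : Q1 × Q1) (hq : qv.1 < qv.2)
    (hcut : ∀ a b : Q1, a < b →
      (((a, b) = qv ∨ (a, b) = (q1inv qv.1, q1inv qv.2)) ↔ s a ≠ s b)) :
    ∑ j ∈ Finset.range (4 * n), (if npair f j = qv then (1 : ZMod 2) else 0) = 1 := by
  classical
  set qw : Q1 × Q1 := (q1inv qv.1, q1inv qv.2) with hqw
  have hshift : ∀ j : ℕ, npair f (2 * n + j) = (q1inv (npair f j).1, q1inv (npair f j).2) := by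
    intro j
    have hpar : Even (2 * n + j) ↔ Even j := by
      rw [Nat.even_add, Nat.even_iff, Nat.even_iff]; omega
    have hc1 : ((2 * n + j : ℕ) : Crown n) = ((j : ℕ) : Crown n) + ((2 * n : ℕ) : Crown n) := by
      push_cast; ring
    have hc2 : ((2 * n + j + 1 : ℕ) : Crown n)
        = ((j + 1 : ℕ) : Crown n) + ((2 * n : ℕ) : Crown n) := by
      push_cast; ring
    unfold npair
    by_cases h : Even j
    · rw [if_pos (hpar.mpr h), if_pos h, hc1, hc2, hequiv, hequiv]
    · rw [if_neg (fun hc => h (hpar.mp hc)), if_neg h, hc1, hc2, hequiv, hequiv]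
  set dd : ℕ → ZMod 2 := fun j => if s (f ((j : ℕ) : Crown n)) = true then 1 else 0 with hdd
  have hqq : qv ≠ qw := by
    intro hc2
    exact q1inv_ne qv.1 (congrArg Prod.fst hc2).symm
  have key : ∀ j : ℕ,
      ((if npair f j = qv then (1 : ZMod 2) else 0) + (if npair f j = qw then 1 else 0))
        = dd (j + 1) - dd j := by
    intro j
    by_cases hfe : f ((j : ℕ) : Crown n) = f ((j + 1 : ℕ) : Crown n)
    · have h1 : npair f j = (f ((j : ℕ) : Crown n), f ((j : ℕ) : Crown n)) := by
        unfold npair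
        split_ifs <;> rw [hfe]
      have hne1 : npair f j ≠ qv := by
        rw [h1]; intro hc
        exact (ne_of_lt hq) (by rw [← hc])
      have hne2 : npair f j ≠ qw := by
        rw [h1]; intro hc
        apply ne_of_lt hq
        rw [hqw] at hc
        have a1 := congrArg Prod.fst hc
        have a2 := congrArg Prod.snd hc
        simp only [Prod.fst, Prod.snd] at a1 a2
        exact q1inv_inj _ _ (a1.symm.trans a2)
      rw [if_neg hne1, if_neg hne2, hdd]
      simp [hfe]
    · have hle : (npair f j).1 ≤ (npair f j).2 := npair_le hmono j
      have hne : (npair f j).1 ≠ (npair f j).2 := by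
        unfold npair
        split_ifs
        · exact hfe
        · exact fun hc => hfe hc.symm
      have hlt : (npair f j).1 < (npair f j).2 := lt_of_le_of_ne hle hne
      have hc := hcut _ _ hlt
      have hset : (s (npair f j).1 ≠ s (npair f j).2)
          ↔ (s (f ((j : ℕ) : Crown n)) ≠ s (f ((j + 1 : ℕ) : Crown n))) := by
        unfold npair
        split_ifs
        · exact Iff.rfl
        · exact ne_comm
      have hdiff : (s (f ((j : ℕ) : Crown n)) ≠ s (f ((j + 1 : ℕ) : Crown n)))
          → dd (j + 1) - dd j = 1 := by
        intro hsd
        cases hb0 : s (f ((j : ℕ) : Crown n)) <;>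
          cases hb1 : s (f ((j + 1 : ℕ) : Crown n))
        · rw [hb0, hb1] at hsd; exact absurd rfl hsd
        · simp only [hdd, hb0, hb1]; decide
        · simp only [hdd, hb0, hb1]; decide
        · rw [hb0, hb1] at hsd; exact absurd rfl hsd
      have hsame : (s (f ((j : ℕ) : Crown n)) = s (f ((j + 1 : ℕ) : Crown n)))
          → dd (j + 1) - dd j = 0 := by
        intro hsd
        simp only [hdd, hsd]
        exact sub_self _
      by_cases hin : npair f j = qv ∨ npair f j = qw
      · have hsne := hc.mp (by rcases hin with h | h <;> rw [← h] <;> [left; right] <;> rfl)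
        rw [hset] at hsne
        rw [hdiff hsne]
        rcases hin with h | h
        · rw [if_pos h, if_neg (by rw [h]; exact hqq), add_zero]
        · rw [if_neg (by rw [h]; exact fun hx => hqq hx.symm), if_pos h, zero_add]
      · rw [not_or] at hin
        have hs2 : s (f ((j : ℕ) : Crown n)) = s (f ((j + 1 : ℕ) : Crown n)) := by
          by_contra hcon
          rcases hc.mpr (hset.mpr hcon) with h | h
          · exact hin.1 h
          · exact hin.2 h
        rw [if_neg hin.1, if_neg hin.2, hsame hs2, add_zero]
  have hsum2 : ∀ j : ℕ, (if npair f (2 * n + j) = qv then (1 : ZMod 2) else 0)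
      = (if npair f j = qw then 1 else 0) := by
    intro j
    rw [hshift j]
    by_cases h : npair f j = qw
    · rw [if_pos h, if_pos]
      rw [h, hqw]
      exact Prod.ext (q1inv_invol _) (q1inv_invol _)
    · rw [if_neg h, if_neg]
      intro hx
      apply h
      rw [hqw]
      refine Prod.ext ?_ ?_
      · have := congrArg Prod.fst hx
        simp at this
        rw [← this, q1inv_invol]
      · have := congrArg Prod.snd hx
        simp at this
        rw [← this, q1inv_invol]
  have h4 : 4 * n = 2 * n + 2 * n := by ring
  rw [h4, Finset.sum_range_add]
  rw [Finset.sum_congr rfl (fun j _ => hsum2 j), ← Finset.sum_add_distrib]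
  rw [Finset.sum_congr rfl (fun j _ => key j), Finset.sum_range_sub dd (2 * n)]
  have he : f ((2 * n : ℕ) : Crown n) = q1inv (f (0 : Crown n)) := by
    have h0 := hequiv (0 : Crown n)
    rwa [zero_add] at h0
  simp only [hdd, Nat.cast_zero, he, hsinv]
  cases h0 : s (f (0 : Crown n)) <;> decide

private def sA : Q1 → Bool
  | .p0 => true | .m1 => true | _ => false

private def sB : Q1 → Bool
  | .p0 => true | .p1 => true | _ => false

end StrictAux

/-- If `P` is the `Z₂`-crown of order `n ≥ 1` and `f : P → Q₁` is a
`Z₂`-map, then `f̂(soi(P)) = soi(Q₁)`. -/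
theorem crown_z2map_soi (n : ℕ) [NeZero n] (f : Crown n → Q1) (hmono : Monotone f)
    (hequiv : ∀ x : Crown n, f (x + ((2 * n : ℕ) : Crown n)) = q1inv (f x)) :
    fhat hmono (soi (Crown n)) = soi Q1 := by
  ext q
  rw [fhat_soi_apply f hmono q, soi_q1_apply q]
  obtain ⟨⟨a, b⟩, hab⟩ := q
  have hab' : a = b ∨ (a.lvl = false ∧ b.lvl = true) := hab
  rcases hab' with h | ⟨h1, h2⟩
  · subst h
    rw [if_neg (lt_irrefl a)]
    exact diag_sum f hmono a
  · have hlt : a < b := by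
      refine lt_of_le_of_ne hab ?_
      rintro rfl
      rw [h1] at h2
      cases h2
    rw [if_pos hlt]
    rw [zmod_sum_to_range
      (fun k => if cpair f k = ((a, b) : Q1 × Q1) then (1 : ZMod 2) else 0)]
    rw [Finset.sum_congr rfl (fun j _ => by rw [cpair_natCast])]
    cases a <;> cases b <;>
      first
        | exact absurd h1 (by decide)
        | exact absurd h2 (by decide)
        | exact strict_sum f hmono hequiv sA (by decide) (Q1.p0, Q1.p1) (by decide) (by decide)
        | exact strict_sum f hmono hequiv sB (by decide) (Q1.p0, Q1.m1) (by decide) (by decide)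
        | exact strict_sum f hmono hequiv sB (by decide) (Q1.m0, Q1.p1) (by decide) (by decide)
        | exact strict_sum f hmono hequiv sA (by decide) (Q1.m0, Q1.m1) (by decide) (by decide)
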